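/- For each κ ∈ ℂ, the product a •_κ b = (a+b+2abκ)/(1+ab(1-κ²)) is commutative and associative where defined, and the map f(t) = sinh t / (cosh t - (sinh t)κ) satisfies the exponential law f(s) •_κ f(t) = f(s+t), whenever cosh s - (sinh s)κ ≠ 0, cosh t - (sinh t)κ ≠ 0, cosh(s+t) - (sinh(s+t))κ ≠ 0 and the denominator 1 + f(s)f(t)(1-κ²) ≠ 0. -/

import Mathlib

open Complex

/-- The broken product `a •_κ b = (a+b+2abκ)/(1+ab(1-κ²))`. -/
noncomputable def bulletK (κ a b : ℂ) : ℂ :=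
  (a + b + 2 * a * b * κ) / (1 + a * b * (1 - κ ^ 2))

/-- `f(t) = sinh t / (cosh t - (sinh t)κ)`. -/
noncomputable def expK (κ t : ℂ) : ℂ :=
  Complex.sinh t / (Complex.cosh t - Complex.sinh t * κ)

/-- `•_κ` is commutative and associative where defined, and
`f(t) = sinh t/(cosh t - (sinh t)κ)` satisfies the exponential law. -/
theorem bulletK_comm_assoc_exp (κ : ℂ) :
    (∀ a b : ℂ, bulletK κ a b = bulletK κ b a) ∧
    (∀ a b c : ℂ, 1 + a * b * (1 - κ ^ 2) ≠ 0 → 1 + b * c * (1 - κ ^ 2) ≠ 0 →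
      1 + bulletK κ a b * c * (1 - κ ^ 2) ≠ 0 →
      1 + a * bulletK κ b c * (1 - κ ^ 2) ≠ 0 →
      bulletK κ (bulletK κ a b) c = bulletK κ a (bulletK κ b c)) ∧
    (∀ s t : ℂ,
      Complex.cosh s - Complex.sinh s * κ ≠ 0 →
      Complex.cosh t - Complex.sinh t * κ ≠ 0 →
      Complex.cosh (s + t) - Complex.sinh (s + t) * κ ≠ 0 →
      1 + expK κ s * expK κ t * (1 - κ ^ 2) ≠ 0 →
      bulletK κ (expK κ s) (expK κ t) = expK κ (s + t)) := by
  refine ⟨fun a b => by unfold bulletK; ring_nf, ?_, ?_⟩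
  · intro a b c h1 h2 h3 h4
    have e3 : 1 + bulletK κ a b * c * (1 - κ ^ 2)
        = ((1 + a * b * (1 - κ ^ 2)) + (a + b + 2 * a * b * κ) * c * (1 - κ ^ 2))
          / (1 + a * b * (1 - κ ^ 2)) := by unfold bulletK; field_simp
    have e4 : 1 + a * bulletK κ b c * (1 - κ ^ 2)
        = ((1 + b * c * (1 - κ ^ 2)) + a * (b + c + 2 * b * c * κ) * (1 - κ ^ 2))
          / (1 + b * c * (1 - κ ^ 2)) := by unfold bulletK; field_simp
    have h3' : (1 + a * b * (1 - κ ^ 2)) + (a + b + 2 * a * b * κ) * c * (1 - κ ^ 2) ≠ 0 := by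
      intro h; exact h3 (by rw [e3, h, zero_div])
    have h4' : (1 + b * c * (1 - κ ^ 2)) + a * (b + c + 2 * b * c * κ) * (1 - κ ^ 2) ≠ 0 := by
      intro h; exact h4 (by rw [e4, h, zero_div])
    unfold bulletK
    rw [div_eq_div_iff (by exact h3) (by exact h4)]
    have h2n : 1 + b * (1 - κ ^ 2) * c ≠ 0 := by intro h; exact h2 (by linear_combination h)
    field_simp
    ring
  · intro s t hs ht hst hd
    have key : (Complex.cosh s - Complex.sinh s * κ) * (Complex.cosh t - Complex.sinh t * κ)
        + Complex.sinh s * Complex.sinh t * (1 - κ ^ 2)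
        = Complex.cosh (s + t) - Complex.sinh (s + t) * κ := by
      rw [Complex.cosh_add, Complex.sinh_add]; ring
    have hden : (Complex.cosh s - Complex.sinh s * κ) * (Complex.cosh t - Complex.sinh t * κ)
        + Complex.sinh s * Complex.sinh t * (1 - κ ^ 2) ≠ 0 := by rw [key]; exact hst
    unfold bulletK expK
    rw [div_eq_div_iff (by exact hd) hst]
    have htn : cosh t - κ * sinh t ≠ 0 := by intro h; exact ht (by linear_combination h)
    field_simp
    rw [Complex.cosh_add, Complex.sinh_add]
    ring
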